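/- (Equivalence of optimal chaining cost under strict and ChainX precedence) Let Q and T be strings and let 𝒜 be a finite set of exact match anchors between Q and T. Then the minimum cost of a chain under strict precedence ≺ over 𝒜 equals the minimum cost of a chain under strong (ChainX) precedence ≺_X over 𝒜. -/

import Mathlib

/-- An anchor: a pair of integer intervals `([qs..qe],[ts..te])`. -/
structure Anchor where
  qs : ℤ
  qe : ℤ
  ts : ℤ
  te : ℤ
deriving DecidableEq

/-- `a` is a well-formed anchor: nonempty intervals satisfying the
    exact-match invariant `qe - qs = te - ts`. -/
def Anchor.Valid (a : Anchor) : Prop :=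
  a.qs ≤ a.qe ∧ a.ts ≤ a.te ∧ a.qe - a.qs = a.te - a.ts

/-- Strict precedence `a ≺ a'`. -/
def strictPrec (a a' : Anchor) : Prop :=
  a.qs ≤ a'.qs ∧ a.qe ≤ a'.qe ∧ a.ts ≤ a'.ts ∧ a.te ≤ a'.te ∧
    (a.qs < a'.qs ∨ a.qe < a'.qe ∨ a.ts < a'.ts ∨ a.te < a'.te)

/-- Weak precedence `a ≺_w a'`. -/
def weakPrec (a a' : Anchor) : Prop :=
  a.qs ≤ a'.qs ∧ a.ts ≤ a'.ts ∧ (a.qs < a'.qs ∨ a.ts < a'.ts)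

/-- Strong (ChainX) precedence `a ≺_X a'`. -/
def chainxPrec (a a' : Anchor) : Prop :=
  a.qs < a'.qs ∧ a.qe < a'.qe ∧ a.ts < a'.ts ∧ a.te < a'.te

/-- Gap cost `gap(a,a') = max(0, qs' - qe - 1, ts' - te - 1)`. -/
def gapCost (a a' : Anchor) : ℤ :=
  max 0 (max (a'.qs - a.qe - 1) (a'.ts - a.te - 1))

/-- Overlap cost `o(a,a') = |max(0, qe - qs' + 1) - max(0, te - ts' + 1)|`. -/
def ovCost (a a' : Anchor) : ℤ :=
  |max 0 (a.qe - a'.qs + 1) - max 0 (a.te - a'.ts + 1)|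

/-- `connect(a,a') = gap(a,a') + o(a,a')`. -/
def connectCost (a a' : Anchor) : ℤ := gapCost a a' + ovCost a a'

/-- The diagonal of an anchor: `diag(a) = qs - ts`. -/
def Anchor.diag (a : Anchor) : ℤ := a.qs - a.ts


/-- `a` is an exact match anchor between (1-indexed) strings `Q` and `T`:
    the intervals are within bounds, nonempty, have equal length, and the
    corresponding characters match. -/
def IsEMA {α : Type*} (Q T : List α) (a : Anchor) : Prop :=
  1 ≤ a.qs ∧ a.qs ≤ a.qe ∧ a.qe ≤ Q.length ∧
  1 ≤ a.ts ∧ a.ts ≤ a.te ∧ a.te ≤ T.length ∧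
  a.qe - a.qs = a.te - a.ts ∧
  ∀ k : ℤ, 0 ≤ k → k ≤ a.qe - a.qs →
    Q[(a.qs + k - 1).toNat]? = T[(a.ts + k - 1).toNat]?

/-- The start sentinel anchor `([0..0],[0..0])`. -/
def startAnchor : Anchor := ⟨0, 0, 0, 0⟩

/-- The end sentinel anchor `([|Q|+1..|Q|+1],[|T|+1..|T|+1])`. -/
def endAnchor (m n : ℕ) : Anchor := ⟨(m : ℤ) + 1, (m : ℤ) + 1, (n : ℤ) + 1, (n : ℤ) + 1⟩

/-- Sum of connect costs over consecutive elements of a list of anchors. -/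
def pathCost : List Anchor → ℤ
  | [] => 0
  | [_] => 0
  | x :: y :: rest => connectCost x y + pathCost (y :: rest)

/-- Cost of a chain `A = a_1, ..., a_c`:
    `Σ_{i=0}^{c} connect(a_i, a_{i+1})` with the sentinel anchors
    `a_0` and `a_{c+1}` added at the ends. -/
def chainCost {α : Type*} (Q T : List α) (A : List Anchor) : ℤ :=
  pathCost (startAnchor :: A ++ [endAnchor Q.length T.length])

/-- The set of costs of chains over `𝒜` under the precedence relation `prec`. -/
def chainCosts {α : Type*} (Q T : List α) (𝒜 : Finset Anchor)
    (prec : Anchor → Anchor → Prop) : Set ℤ :=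
  {c | ∃ A : List Anchor, (∀ a ∈ A, a ∈ 𝒜) ∧ A.Chain' prec ∧ c = chainCost Q T A}


section Aux

private def Fc (x y : ℤ) : ℤ := max 0 (max x y) + |min 0 x - min 0 y|

private lemma connectCost_eq (a b : Anchor) :
    connectCost a b = Fc (b.qs - a.qe - 1) (b.ts - a.te - 1) := by
  simp only [connectCost, gapCost, ovCost, Fc]
  rw [abs_eq_max_neg, abs_eq_max_neg]
  omega

private lemma Fc_lip1 (x y s : ℤ) (hs : 0 ≤ s) : Fc x (y + s) ≤ Fc x y + s := by
  simp only [Fc]; rw [abs_eq_max_neg, abs_eq_max_neg]; omega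

private lemma Fc_lip2 (x y s : ℤ) (hs : 0 ≤ s) : Fc (x + s) y ≤ Fc x y + s := by
  simp only [Fc]; rw [abs_eq_max_neg, abs_eq_max_neg]; omega

private lemma Fc_deg1 (x s : ℤ) (hx : x ≤ 0) (hs : 0 ≤ s) : Fc x (x + s) = s := by
  simp only [Fc]; rw [abs_eq_max_neg]; omega

private lemma Fc_deg2 (x s : ℤ) (hx : x ≤ 0) (hs : 0 ≤ s) : Fc (x + s) x = s := by
  simp only [Fc]; rw [abs_eq_max_neg]; omega

private lemma lemA (p a b : Anchor) (ha : a.Valid) (hqs : a.qs ≤ b.qs) (hts : a.ts ≤ b.ts)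
    (heq : a.qs = b.qs ∨ a.ts = b.ts) :
    connectCost p b ≤ connectCost p a + connectCost a b := by
  obtain ⟨hv1, hv2, hv3⟩ := ha
  rw [connectCost_eq, connectCost_eq, connectCost_eq]
  rcases heq with h | h
  · have hs : 0 ≤ b.ts - a.ts := by omega
    rw [show b.qs - p.qe - 1 = a.qs - p.qe - 1 by omega,
        show b.ts - p.te - 1 = (a.ts - p.te - 1) + (b.ts - a.ts) by ring,
        show b.qs - a.qe - 1 = a.qs - a.qe - 1 by omega,
        show b.ts - a.te - 1 = (a.qs - a.qe - 1) + (b.ts - a.ts) by omega,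
        Fc_deg1 _ _ (by omega) hs]
    exact Fc_lip1 _ _ _ hs
  · have hs : 0 ≤ b.qs - a.qs := by omega
    rw [show b.qs - p.qe - 1 = (a.qs - p.qe - 1) + (b.qs - a.qs) by ring,
        show b.ts - p.te - 1 = a.ts - p.te - 1 by omega,
        show b.qs - a.qe - 1 = (a.ts - a.te - 1) + (b.qs - a.qs) by omega,
        show b.ts - a.te - 1 = a.ts - a.te - 1 by omega,
        Fc_deg2 _ _ (by omega) hs]
    exact Fc_lip2 _ _ _ hs

private lemma lemB (a b n : Anchor) (hb : b.Valid) (hqe : a.qe ≤ b.qe) (hte : a.te ≤ b.te)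
    (heq : a.qe = b.qe ∨ a.te = b.te) :
    connectCost a n ≤ connectCost a b + connectCost b n := by
  obtain ⟨hv1, hv2, hv3⟩ := hb
  rw [connectCost_eq, connectCost_eq, connectCost_eq]
  rcases heq with h | h
  · have hs : 0 ≤ b.te - a.te := by omega
    rw [show n.qs - a.qe - 1 = n.qs - b.qe - 1 by omega,
        show n.ts - a.te - 1 = (n.ts - b.te - 1) + (b.te - a.te) by ring,
        show b.qs - a.qe - 1 = b.qs - b.qe - 1 by omega,
        show b.ts - a.te - 1 = (b.qs - b.qe - 1) + (b.te - a.te) by omega,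
        Fc_deg1 _ _ (by omega) hs]
    have := Fc_lip1 (n.qs - b.qe - 1) (n.ts - b.te - 1) (b.te - a.te) hs
    omega
  · have hs : 0 ≤ b.qe - a.qe := by omega
    rw [show n.qs - a.qe - 1 = (n.qs - b.qe - 1) + (b.qe - a.qe) by ring,
        show n.ts - a.te - 1 = n.ts - b.te - 1 by omega,
        show b.qs - a.qe - 1 = (b.ts - b.te - 1) + (b.qe - a.qe) by omega,
        show b.ts - a.te - 1 = b.ts - b.te - 1 by omega,
        Fc_deg2 _ _ (by omega) hs]
    have := Fc_lip2 (n.qs - b.qe - 1) (n.ts - b.te - 1) (b.qe - a.qe) hs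
    omega

private lemma connectCost_nonneg (a b : Anchor) : 0 ≤ connectCost a b :=
  add_nonneg (le_max_left _ _) (abs_nonneg _)

private lemma pathCost_nonneg : ∀ l : List Anchor, 0 ≤ pathCost l
  | [] => le_refl _
  | [_] => le_refl _
  | x :: y :: rest =>
    add_nonneg (connectCost_nonneg x y) (pathCost_nonneg (y :: rest))

private lemma strict_trans {a b c : Anchor} (h1 : strictPrec a b) (h2 : strictPrec b c) :
    strictPrec a c := by
  simp only [strictPrec] at *; omega

private lemma chainx_imp_strict {a b : Anchor} (h : chainxPrec a b) : strictPrec a b := by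
  simp only [strictPrec, chainxPrec] at *; omega

private lemma valid_of_ema {α : Type*} {Q T : List α} {a : Anchor} (h : IsEMA Q T a) :
    a.Valid :=
  ⟨h.2.1, h.2.2.2.2.1, h.2.2.2.2.2.2.1⟩

private lemma pathCost_drop_fst (a b : Anchor)
    (h : ∀ p, connectCost p b ≤ connectCost p a + connectCost a b) :
    ∀ (l : List Anchor) (x : Anchor) (r : List Anchor),
      pathCost (x :: (l ++ b :: r)) ≤ pathCost (x :: (l ++ a :: b :: r)) := by
  intro l
  induction l with
  | nil =>
    intro x r
    simp only [List.nil_append, pathCost]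
    have := h x
    omega
  | cons y l ih =>
    intro x r
    exact add_le_add_right (ih y r) _

private lemma pathCost_tail_drop (a b : Anchor)
    (h : ∀ n, connectCost a n ≤ connectCost a b + connectCost b n) :
    ∀ r : List Anchor, pathCost (a :: r) ≤ connectCost a b + pathCost (b :: r) := by
  intro r
  cases r with
  | nil =>
    simp only [pathCost]
    have := connectCost_nonneg a b
    omega
  | cons n r' =>
    simp only [pathCost]
    have := h n
    omega

private lemma pathCost_drop_snd (a b : Anchor)
    (h : ∀ n, connectCost a n ≤ connectCost a b + connectCost b n) :
    ∀ (l : List Anchor) (x : Anchor) (r : List Anchor),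
      pathCost (x :: (l ++ a :: r)) ≤ pathCost (x :: (l ++ a :: b :: r)) := by
  intro l
  induction l with
  | nil =>
    intro x r
    simp only [List.nil_append, pathCost]
    have := pathCost_tail_drop a b h r
    omega
  | cons y l ih =>
    intro x r
    exact add_le_add_right (ih y r) _

private lemma find_viol :
    ∀ A : List Anchor, A.Chain' strictPrec → ¬ A.Chain' chainxPrec →
      ∃ l a b r, A = l ++ a :: b :: r ∧ strictPrec a b ∧ ¬ chainxPrec a b := by
  intro A
  induction A with
  | nil => intro _ h; exact absurd List.isChain_nil h
  | cons x A ih =>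
    intro hs hn
    cases A with
    | nil => exact absurd (List.isChain_singleton x) hn
    | cons y r =>
      unfold List.Chain' at hs hn
      rw [List.isChain_cons_cons] at hs hn
      by_cases hxy : chainxPrec x y
      · have hnr : ¬ (y :: r).Chain' chainxPrec := fun h => hn ⟨hxy, h⟩
        obtain ⟨l, a, b, r', heq, h1, h2⟩ := ih hs.2 hnr
        exact ⟨x :: l, a, b, r', by simp [heq], h1, h2⟩
      · exact ⟨[], x, y, r, rfl, hs.1, hxy⟩

private lemma reduce_chain {α : Type*} (Q T : List α) (𝒜 : Finset Anchor)
    (hA : ∀ a ∈ 𝒜, IsEMA Q T a) :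
    ∀ (N : ℕ) (A : List Anchor), A.length ≤ N → (∀ x ∈ A, x ∈ 𝒜) →
      A.Chain' strictPrec →
      ∃ A', (∀ x ∈ A', x ∈ 𝒜) ∧ A'.Chain' chainxPrec ∧
        chainCost Q T A' ≤ chainCost Q T A := by
  intro N
  induction N with
  | zero =>
    intro A hL _ _
    have : A = [] := List.eq_nil_of_length_eq_zero (Nat.le_zero.mp hL)
    subst this
    exact ⟨[], by simp, List.isChain_nil, le_refl _⟩
  | succ N ih =>
    intro A hL hm hc
    by_cases hx : A.Chain' chainxPrec
    · exact ⟨A, hm, hx, le_refl _⟩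
    obtain ⟨l, a, b, r, rfl, hab, hnx⟩ := find_viol A hc hx
    have ha𝒜 : a ∈ 𝒜 := hm a (by simp)
    have hb𝒜 : b ∈ 𝒜 := hm b (by simp)
    have haV : a.Valid := valid_of_ema (hA a ha𝒜)
    have hbV : b.Valid := valid_of_ema (hA b hb𝒜)
    obtain ⟨hcl, hcr, hjun⟩ := List.isChain_append.mp hc
    rw [List.isChain_cons_cons] at hcr
    obtain ⟨hab', hcbr⟩ := hcr
    by_cases hstart : a.qs = b.qs ∨ a.ts = b.ts
    · -- drop a
      have hm2 : ∀ x ∈ l ++ b :: r, x ∈ 𝒜 := by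
        intro x hx'
        apply hm
        simp only [List.mem_append, List.mem_cons] at hx' ⊢
        tauto
      have hc2 : (l ++ b :: r).Chain' strictPrec := by
        refine List.isChain_append.mpr ⟨hcl, hcbr, ?_⟩
        intro x hx' y hy'
        simp only [List.head?_cons, Option.mem_some_iff] at hy'
        subst hy'
        exact strict_trans (hjun x hx' a (by simp)) hab
      have hcost : chainCost Q T (l ++ b :: r) ≤ chainCost Q T (l ++ a :: b :: r) := by
        unfold chainCost
        simp only [List.append_assoc, List.cons_append]
        exact pathCost_drop_fst a b
          (fun p => lemA p a b haV hab.1 hab.2.2.1 hstart) l startAnchor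
          (r ++ [endAnchor Q.length T.length])
      have hL2 : (l ++ b :: r).length ≤ N := by
        simp only [List.length_append, List.length_cons] at hL ⊢
        omega
      obtain ⟨A', h1, h2, h3⟩ := ih (l ++ b :: r) hL2 hm2 hc2
      exact ⟨A', h1, h2, h3.trans hcost⟩
    · -- drop b
      have hend : a.qe = b.qe ∨ a.te = b.te := by
        push_neg at hstart
        obtain ⟨e1, e2, e3, e4, e5⟩ := hab
        simp only [chainxPrec, not_and_or, not_lt] at hnx
        omega
      have hm2 : ∀ x ∈ l ++ a :: r, x ∈ 𝒜 := by
        intro x hx'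
        apply hm
        simp only [List.mem_append, List.mem_cons] at hx' ⊢
        tauto
      have hcar : (a :: r).Chain' strictPrec := by
        unfold List.Chain'
        rw [List.isChain_cons] at hcbr ⊢
        exact ⟨fun y hy => strict_trans hab (hcbr.1 y hy), hcbr.2⟩
      have hc2 : (l ++ a :: r).Chain' strictPrec := by
        refine List.isChain_append.mpr ⟨hcl, hcar, ?_⟩
        intro x hx' y hy'
        simp only [List.head?_cons, Option.mem_some_iff] at hy'
        subst hy'
        exact hjun x hx' a (by simp)
      have hcost : chainCost Q T (l ++ a :: r) ≤ chainCost Q T (l ++ a :: b :: r) := by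
        unfold chainCost
        simp only [List.append_assoc, List.cons_append]
        exact pathCost_drop_snd a b
          (fun n => lemB a b n hbV hab.2.1 hab.2.2.2.1 hend) l startAnchor
          (r ++ [endAnchor Q.length T.length])
      have hL2 : (l ++ a :: r).length ≤ N := by
        simp only [List.length_append, List.length_cons] at hL ⊢
        omega
      obtain ⟨A', h1, h2, h3⟩ := ih (l ++ a :: r) hL2 hm2 hc2
      exact ⟨A', h1, h2, h3.trans hcost⟩

end Aux

/-- For a finite set of exact match anchors between `Q` and `T`, the optimal
    chaining cost under strict precedence equals the optimal chaining cost
    under strong (ChainX) precedence. -/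
theorem optimal_cost_strict_eq_chainx {α : Type*} (Q T : List α)
    (𝒜 : Finset Anchor) (hA : ∀ a ∈ 𝒜, IsEMA Q T a) :
    sInf (chainCosts Q T 𝒜 strictPrec) = sInf (chainCosts Q T 𝒜 chainxPrec) := by
  have hne_x : (chainCosts Q T 𝒜 chainxPrec).Nonempty :=
    ⟨chainCost Q T [], [], by simp, List.isChain_nil, rfl⟩
  have hne_s : (chainCosts Q T 𝒜 strictPrec).Nonempty :=
    ⟨chainCost Q T [], [], by simp, List.isChain_nil, rfl⟩
  have hbdd : ∀ prec, BddBelow (chainCosts Q T 𝒜 prec) := by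
    intro prec
    refine ⟨0, fun c hc => ?_⟩
    obtain ⟨A, -, -, rfl⟩ := hc
    exact pathCost_nonneg _
  apply le_antisymm
  · refine csInf_le_csInf (hbdd strictPrec) hne_x ?_
    rintro c ⟨A, h1, h2, h3⟩
    exact ⟨A, h1, h2.imp (fun a b h => chainx_imp_strict h), h3⟩
  · refine le_csInf hne_s ?_
    rintro c ⟨A, hm, hc, rfl⟩
    obtain ⟨A', h1, h2, h3⟩ := reduce_chain Q T 𝒜 hA A.length A le_rfl hm hc
    exact (csInf_le (hbdd chainxPrec) ⟨A', h1, h2, rfl⟩).trans h3
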